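/- Fix ν ∈ ℂ, ψ ∈ ℝ and σ ∈ ℂ, and define f, g : ℝ → ℝ by f(A) = −2·Im[(e^{−iA}ψ + e^{iA}σ)/(1 + νν̄)] and g(A) = −2·Re[(e^{−iA}ψ + e^{iA}σ)/(1 + νν̄)]. Then for every A ∈ ℝ: g(A)·f′(A) − f(A)·g′(A) = 4(|σ|² − ψ²)/(1 + |ν|²)². In particular, this quantity is nonzero for all A if and only if ψ² ≠ |σ|². -/

import Mathlib

/-- f(A) = −2·Im[(e^{−iA}ψ + e^{iA}σ)/(1 + νν̄)]. -/
noncomputable def alphaF (ν : ℂ) (ψ : ℝ) (σ : ℂ) (A : ℝ) : ℝ :=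
  -2 * ((Complex.exp (-(A : ℂ) * Complex.I) * (ψ : ℂ) +
      Complex.exp ((A : ℂ) * Complex.I) * σ) / (1 + ν * (starRingEnd ℂ) ν)).im

/-- g(A) = −2·Re[(e^{−iA}ψ + e^{iA}σ)/(1 + νν̄)]. -/
noncomputable def alphaG (ν : ℂ) (ψ : ℝ) (σ : ℂ) (A : ℝ) : ℝ :=
  -2 * ((Complex.exp (-(A : ℂ) * Complex.I) * (ψ : ℂ) +
      Complex.exp ((A : ℂ) * Complex.I) * σ) / (1 + ν * (starRingEnd ℂ) ν)).re

lemma denom_eq (ν : ℂ) : (1 : ℂ) + ν * (starRingEnd ℂ) ν = ((1 + ‖ν‖ ^ 2 : ℝ) : ℂ) := by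
  rw [Complex.mul_conj]
  push_cast [Complex.sq_norm]
  ring

lemma num_eq (ψ : ℝ) (σ : ℂ) (A : ℝ) :
    Complex.exp (-(A : ℂ) * Complex.I) * (ψ : ℂ) + Complex.exp ((A : ℂ) * Complex.I) * σ =
    ⟨(ψ + σ.re) * Real.cos A - σ.im * Real.sin A,
     (σ.re - ψ) * Real.sin A + σ.im * Real.cos A⟩ := by
  rw [show -(A : ℂ) = ((-A : ℝ) : ℂ) by push_cast; ring]
  rw [Complex.exp_mul_I, Complex.exp_mul_I]
  rw [← Complex.ofReal_cos, ← Complex.ofReal_sin, ← Complex.ofReal_cos A, ← Complex.ofReal_sin A]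
  apply Complex.ext <;>
    simp [Complex.mul_re, Complex.mul_im, Real.cos_neg, Real.sin_neg, Complex.cos_ofReal_re, Complex.sin_ofReal_re, Complex.cos_ofReal_im, Complex.sin_ofReal_im] <;> ring

lemma alphaF_eq (ν : ℂ) (ψ : ℝ) (σ : ℂ) :
    alphaF ν ψ σ = fun A =>
      (-2 / (1 + ‖ν‖ ^ 2)) * ((σ.re - ψ) * Real.sin A + σ.im * Real.cos A) := by
  funext A
  unfold alphaF
  rw [num_eq, denom_eq, Complex.div_ofReal_im]
  ring

lemma alphaG_eq (ν : ℂ) (ψ : ℝ) (σ : ℂ) :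
    alphaG ν ψ σ = fun A =>
      (-2 / (1 + ‖ν‖ ^ 2)) * ((ψ + σ.re) * Real.cos A - σ.im * Real.sin A) := by
  funext A
  unfold alphaG
  rw [num_eq, denom_eq, Complex.div_ofReal_re]
  ring

lemma derivF (ν : ℂ) (ψ : ℝ) (σ : ℂ) (A : ℝ) :
    deriv (alphaF ν ψ σ) A =
      (-2 / (1 + ‖ν‖ ^ 2)) * ((σ.re - ψ) * Real.cos A - σ.im * Real.sin A) := by
  rw [alphaF_eq]
  have h : HasDerivAt (fun A => (-2 / (1 + ‖ν‖ ^ 2)) *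
      ((σ.re - ψ) * Real.sin A + σ.im * Real.cos A))
      ((-2 / (1 + ‖ν‖ ^ 2)) * ((σ.re - ψ) * Real.cos A + σ.im * (-Real.sin A))) A := by
    exact (((Real.hasDerivAt_sin A).const_mul (σ.re - ψ)).add
      ((Real.hasDerivAt_cos A).const_mul σ.im)).const_mul _
  rw [h.deriv]; ring

lemma derivG (ν : ℂ) (ψ : ℝ) (σ : ℂ) (A : ℝ) :
    deriv (alphaG ν ψ σ) A =
      (-2 / (1 + ‖ν‖ ^ 2)) * (-(ψ + σ.re) * Real.sin A - σ.im * Real.cos A) := by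
  rw [alphaG_eq]
  have h : HasDerivAt (fun A => (-2 / (1 + ‖ν‖ ^ 2)) *
      ((ψ + σ.re) * Real.cos A - σ.im * Real.sin A))
      ((-2 / (1 + ‖ν‖ ^ 2)) * ((ψ + σ.re) * (-Real.sin A) - σ.im * Real.cos A)) A := by
    exact (((Real.hasDerivAt_cos A).const_mul (ψ + σ.re)).sub
      ((Real.hasDerivAt_sin A).const_mul σ.im)).const_mul _
  rw [h.deriv]; ring

/-- For all A, g(A)f′(A) − f(A)g′(A) = 4(|σ|² − ψ²)/(1 + |ν|²)²; in particular this
quantity is nonzero for all A iff ψ² ≠ |σ|². -/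
theorem stmt3 (ν : ℂ) (ψ : ℝ) (σ : ℂ) :
    (∀ A : ℝ,
      alphaG ν ψ σ A * deriv (alphaF ν ψ σ) A - alphaF ν ψ σ A * deriv (alphaG ν ψ σ) A =
        4 * (‖σ‖ ^ 2 - ψ ^ 2) / (1 + ‖ν‖ ^ 2) ^ 2) ∧
    ((∀ A : ℝ,
      alphaG ν ψ σ A * deriv (alphaF ν ψ σ) A - alphaF ν ψ σ A * deriv (alphaG ν ψ σ) A ≠ 0)
        ↔ ψ ^ 2 ≠ ‖σ‖ ^ 2) := by
  have hD : (0:ℝ) < 1 + ‖ν‖ ^ 2 := by positivity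
  have habs : ‖σ‖ ^ 2 = σ.re ^ 2 + σ.im ^ 2 := by
    rw [Complex.sq_norm, Complex.normSq_apply]; ring
  have key : ∀ A : ℝ,
      alphaG ν ψ σ A * deriv (alphaF ν ψ σ) A - alphaF ν ψ σ A * deriv (alphaG ν ψ σ) A =
        4 * (‖σ‖ ^ 2 - ψ ^ 2) / (1 + ‖ν‖ ^ 2) ^ 2 := by
    intro A
    rw [derivF, derivG, alphaF_eq, alphaG_eq]
    simp only
    rw [habs]
    have hs := Real.sin_sq_add_cos_sq A
    field_simp
    linear_combination (4 * (σ.re ^ 2 + σ.im ^ 2 - ψ ^ 2)) * hs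
  refine ⟨key, ?_⟩
  constructor
  · intro h hc
    apply h 0
    rw [key 0, hc]
    simp
  · intro h A
    rw [key A]
    intro hc
    apply h
    have : 4 * (‖σ‖ ^ 2 - ψ ^ 2) = 0 := by
      field_simp at hc
      linarith [hc]
    linarith
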